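/- Fix a positive integer n, set v_k = binomial(2k,k) · binomial(2n−2k, n−k) for 0 ≤ k ≤ n, and w_k = v_k − v_{k+1}. Then for every k with 0 ≤ k ≤ (n−3)/2, one has w_{k+1} ≤ w_k; that is, the sequence (w_k) is decreasing for k up to (n−3)/2. -/

import Mathlib

/-- `v_k = C(2k, k) · C(2n − 2k, n − k)`. -/
def vSeq (n k : ℕ) : ℕ := (2 * k).choose k * (2 * (n - k)).choose (n - k)

/-- `w_k = v_k − v_{k+1}`, as a real number. -/
noncomputable def wSeq (n k : ℕ) : ℝ := (vSeq n k : ℝ) - (vSeq n (k + 1) : ℝ)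

lemma vSeq_eq (n k : ℕ) : vSeq n k = Nat.centralBinom k * Nat.centralBinom (n - k) := rfl

set_option maxHeartbeats 1000000 in
/-- The convexity inequality for products of central binomial coefficients. -/
lemma key_ineq (k t : ℕ) :
    2 * ((Nat.centralBinom (k + 1) : ℝ) * Nat.centralBinom (k + 2 + t)) ≤
      (Nat.centralBinom k : ℝ) * Nat.centralBinom (k + 3 + t) +
        (Nat.centralBinom (k + 2) : ℝ) * Nat.centralBinom (k + 1 + t) := by
  set a : ℝ := (Nat.centralBinom k : ℝ) with ha_def
  set c1 : ℝ := (Nat.centralBinom (k + 1) : ℝ) with hc1_def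
  set c2 : ℝ := (Nat.centralBinom (k + 2) : ℝ) with hc2_def
  set b : ℝ := (Nat.centralBinom (k + 1 + t) : ℝ) with hb_def
  set d1 : ℝ := (Nat.centralBinom (k + 2 + t) : ℝ) with hd1_def
  set d2 : ℝ := (Nat.centralBinom (k + 3 + t) : ℝ) with hd2_def
  set K : ℝ := (k : ℝ) with hK_def
  set T : ℝ := (t : ℝ) with hT_def
  have hK : 0 ≤ K := Nat.cast_nonneg k
  have hT : 0 ≤ T := Nat.cast_nonneg t
  have ha : 0 ≤ a := Nat.cast_nonneg _
  have hb : 0 ≤ b := Nat.cast_nonneg _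
  -- recurrences for central binomial coefficients, cast to ℝ
  have hA : (K + 1) * c1 = 2 * (2 * K + 1) * a := by
    have := Nat.succ_mul_centralBinom_succ k
    have := congrArg (Nat.cast : ℕ → ℝ) this
    push_cast at this
    linarith [this]
  have hB : (K + 2) * c2 = 2 * (2 * K + 3) * c1 := by
    have h := Nat.succ_mul_centralBinom_succ (k + 1)
    have e : k + 1 + 1 = k + 2 := by omega
    rw [e] at h
    have h2 := congrArg (Nat.cast : ℕ → ℝ) h
    push_cast at h2
    linarith [h2]
  have hC : (K + T + 2) * d1 = 2 * (2 * (K + T) + 3) * b := by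
    have h := Nat.succ_mul_centralBinom_succ (k + 1 + t)
    have e : k + 1 + t + 1 = k + 2 + t := by omega
    rw [e] at h
    have h2 := congrArg (Nat.cast : ℕ → ℝ) h
    push_cast at h2
    linarith [h2]
  have hD : (K + T + 3) * d2 = 2 * (2 * (K + T) + 5) * d1 := by
    have h := Nat.succ_mul_centralBinom_succ (k + 2 + t)
    have e : k + 2 + t + 1 = k + 3 + t := by omega
    rw [e] at h
    have h2 := congrArg (Nat.cast : ℕ → ℝ) h
    push_cast at h2
    linarith [h2]
  -- combined recurrences
  have hc2' : (K + 1) * (K + 2) * c2 = 4 * (2 * K + 3) * (2 * K + 1) * a := by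
    linear_combination (K + 1) * hB + 2 * (2 * K + 3) * hA
  have hd2' : (K + T + 2) * (K + T + 3) * d2 =
      4 * (2 * (K + T) + 5) * (2 * (K + T) + 3) * b := by
    linear_combination (K + T + 2) * hD + 2 * (2 * (K + T) + 5) * hC
  -- multiply the goal by the positive quantity D
  have hDpos : (0:ℝ) < (K + 1) * (K + 2) * (K + T + 2) * (K + T + 3) := by positivity
  rw [← mul_le_mul_iff_right₀ hDpos]
  have hL : (K + 1) * (K + 2) * (K + T + 2) * (K + T + 3) * (2 * (c1 * d1)) =
      8 * (2 * K + 1) * (2 * (K + T) + 3) * (K + 2) * (K + T + 3) * (a * b) := by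
    linear_combination (2 * (K + 2) * (K + T + 3) * ((K + T + 2) * d1)) * hA +
      (2 * (K + 2) * (K + T + 3) * (2 * (2 * K + 1) * a)) * hC
  have hR : (K + 1) * (K + 2) * (K + T + 2) * (K + T + 3) * (a * d2 + c2 * b) =
      4 * (2 * (K + T) + 5) * (2 * (K + T) + 3) * (K + 1) * (K + 2) * (a * b) +
      4 * (2 * K + 3) * (2 * K + 1) * (K + T + 2) * (K + T + 3) * (a * b) := by
    linear_combination ((K + 1) * (K + 2) * a) * hd2' + ((K + T + 2) * (K + T + 3) * b) * hc2'
  rw [hL, hR]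
  have hab : (0:ℝ) ≤ a * b := mul_nonneg ha hb
  have hpoly : (0:ℝ) ≤ 12 + 11 * T + 3 * T ^ 2 + 14 * K + 4 * K * T + 4 * K ^ 2 := by positivity
  nlinarith [mul_nonneg hab hpoly]

/-- For a fixed positive integer `n` and every `k` with
`0 ≤ k ≤ (n − 3)/2` (i.e. `2k + 3 ≤ n`), one has `w_{k+1} ≤ w_k` : the sequence `(w_k)`
is decreasing for `k` up to `(n − 3)/2`. -/
theorem wSeq_antitone (n : ℕ) (hn : 0 < n) (k : ℕ) (hk : 2 * k + 3 ≤ n) :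
    wSeq n (k + 1) ≤ wSeq n k := by
  obtain ⟨t, ht⟩ : ∃ t, n = 2 * k + 3 + t := ⟨n - (2 * k + 3), by omega⟩
  have h0 : n - k = k + 3 + t := by omega
  have h1 : n - (k + 1) = k + 2 + t := by omega
  have h2 : n - (k + 2) = k + 1 + t := by omega
  have key := key_ineq k t
  unfold wSeq
  rw [vSeq_eq, vSeq_eq, vSeq_eq]
  rw [h0, h1]
  have h2' : n - (k + 1 + 1) = k + 1 + t := by omega
  rw [h2']
  push_cast
  linarith [key]
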